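/- Let G_N be the Grover matrix for N ≥ 2 and let t_G(N) = ⌊π·√N/4⌋. Then the amplitude of the solution state after t_G(N) Grover iterations starting from the non-solution state tends to 1: lim_{N→∞} (G_N^{t_G(N)} · (0, 1)ᵀ)₁ = 1, where (·)₁ denotes the first coordinate. (The Grover algorithm succeeds with negligible error after ⌊π√N/4⌋ iterations for large N.) -/

import Mathlib

open Matrix Real Filter

/-- The 2×2 Grover matrix. -/
noncomputable def GroverM (N : ℕ) : Matrix (Fin 2) (Fin 2) ℝ :=
  !![1 - 2 / (N : ℝ), 2 * Real.sqrt ((N : ℝ) - 1) / (N : ℝ);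
     -(2 * Real.sqrt ((N : ℝ) - 1) / (N : ℝ)), 1 - 2 / (N : ℝ)]

noncomputable def RotM (θ : ℝ) : Matrix (Fin 2) (Fin 2) ℝ :=
  !![Real.cos θ, Real.sin θ; -Real.sin θ, Real.cos θ]

lemma RotM_mul (a b : ℝ) : RotM a * RotM b = RotM (a + b) := by
  ext i j
  fin_cases i <;> fin_cases j <;>
    simp [RotM, Matrix.mul_apply, Fin.sum_univ_two, Real.cos_add, Real.sin_add] <;> ring

lemma RotM_pow (θ : ℝ) (n : ℕ) : RotM θ ^ n = RotM (n * θ) := by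
  induction n with
  | zero =>
    ext i j
    fin_cases i <;> fin_cases j <;> simp [RotM, Matrix.one_apply]
  | succ n ih =>
    rw [pow_succ, ih, RotM_mul]
    push_cast
    ring_nf

lemma grover_eq_rot (N : ℕ) (hN : 2 ≤ N) :
    GroverM N = RotM (2 * Real.arcsin (1 / Real.sqrt N)) := by
  have hN0 : (0:ℝ) < N := by exact_mod_cast Nat.lt_of_lt_of_le (by norm_num) hN
  have hN1 : (1:ℝ) ≤ N := by exact_mod_cast Nat.one_le_of_lt hN
  have hs : (0:ℝ) < Real.sqrt N := Real.sqrt_pos.mpr hN0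
  have hs2 : Real.sqrt N * Real.sqrt N = N := Real.mul_self_sqrt hN0.le
  have hx1 : (1 : ℝ) / Real.sqrt N ≤ 1 := by
    rw [div_le_one hs]
    have : (1:ℝ) ≤ N := by exact_mod_cast Nat.one_le_of_lt hN
    nlinarith [Real.sq_sqrt hN0.le, Real.sqrt_nonneg (N:ℝ)]
  have hx0 : (0:ℝ) ≤ 1 / Real.sqrt N := by positivity
  have hsin : Real.sin (Real.arcsin (1 / Real.sqrt N)) = 1 / Real.sqrt N :=
    Real.sin_arcsin (by linarith) hx1
  have hxsq : (1 / Real.sqrt N) ^ 2 = 1 / N := by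
    rw [div_pow, one_pow, sq, hs2]
  have hcos : Real.cos (Real.arcsin (1 / Real.sqrt N)) = Real.sqrt ((N:ℝ) - 1) / Real.sqrt N := by
    rw [Real.cos_arcsin, hxsq]
    rw [show (1 : ℝ) - 1 / N = ((N:ℝ) - 1) / N by field_simp]
    rw [Real.sqrt_div (by linarith : (0:ℝ) ≤ (N:ℝ) - 1)]
  have h1 : Real.cos (2 * Real.arcsin (1 / Real.sqrt N)) = 1 - 2 / N := by
    rw [Real.cos_two_mul, hcos]
    rw [div_pow, Real.sq_sqrt (by linarith : (0:ℝ) ≤ (N:ℝ) - 1), Real.sq_sqrt hN0.le]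
    field_simp
    ring
  have h2 : Real.sin (2 * Real.arcsin (1 / Real.sqrt N)) = 2 * Real.sqrt ((N:ℝ) - 1) / N := by
    rw [Real.sin_two_mul, hsin, hcos]
    rw [← hs2]
    field_simp
    rw [Real.sqrt_sq hs.le]
  unfold GroverM RotM
  rw [h1, h2]

theorem grover_success :
    Tendsto
      (fun N : ℕ =>
        ((GroverM N ^ ⌊Real.pi * Real.sqrt N / 4⌋₊).mulVec ![0, 1]) 0)
      atTop (nhds 1) := by
  -- limit of the angle
  have hsqrt : Tendsto (fun N : ℕ => Real.sqrt N) atTop atTop := by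
    apply tendsto_atTop_atTop.mpr
    intro b
    refine ⟨⌈b ^ 2⌉₊, fun a ha => ?_⟩
    have hb2 : b ^ 2 ≤ (a : ℝ) := le_trans (Nat.le_ceil _) (by exact_mod_cast ha)
    calc b ≤ |b| := le_abs_self b
      _ = Real.sqrt (b ^ 2) := (Real.sqrt_sq_eq_abs b).symm
      _ ≤ Real.sqrt a := Real.sqrt_le_sqrt hb2
  have hu : Tendsto (fun N : ℕ => Real.pi * Real.sqrt N / 4) atTop atTop := by
    apply Tendsto.atTop_div_const (by norm_num : (0:ℝ) < 4)
    exact hsqrt.const_mul_atTop Real.pi_pos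
  have hfloor : Tendsto (fun N : ℕ =>
      (⌊Real.pi * Real.sqrt N / 4⌋₊ : ℝ) / (Real.pi * Real.sqrt N / 4)) atTop (nhds 1) :=
    tendsto_nat_floor_div_atTop.comp hu
  have hderiv : HasDerivAt Real.arcsin 1 0 := by
    have h := Real.hasDerivAt_arcsin (by norm_num : (0:ℝ) ≠ -1) (by norm_num : (0:ℝ) ≠ 1)
    simpa using h
  have hslope : Tendsto (fun y : ℝ => Real.arcsin y / y) (nhdsWithin 0 {(0:ℝ)}ᶜ) (nhds 1) := by
    have h := hasDerivAt_iff_tendsto_slope.mp hderiv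
    apply h.congr'
    filter_upwards [self_mem_nhdsWithin] with y hy
    simp [slope_def_field, Real.arcsin_zero, div_eq_inv_mul]
  have hx : Tendsto (fun N : ℕ => 1 / Real.sqrt N) atTop (nhdsWithin 0 {(0:ℝ)}ᶜ) := by
    apply tendsto_nhdsWithin_of_tendsto_nhds_of_eventually_within
    · exact Tendsto.div_atTop (tendsto_const_nhds : Tendsto (fun _ : ℕ => (1:ℝ)) atTop (nhds 1)) hsqrt
    · filter_upwards [eventually_ge_atTop 1] with N hN
      have h0 : (0:ℝ) < N := by exact_mod_cast Nat.lt_of_lt_of_le one_pos hN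
      have : (0:ℝ) < Real.sqrt N := Real.sqrt_pos.mpr h0
      simp [Set.mem_compl_iff, ne_of_gt, this.ne']
  have harc : Tendsto (fun N : ℕ => Real.arcsin (1 / Real.sqrt N) / (1 / Real.sqrt N))
      atTop (nhds 1) := hslope.comp hx
  have hangle : Tendsto (fun N : ℕ =>
      (⌊Real.pi * Real.sqrt N / 4⌋₊ : ℝ) * (2 * Real.arcsin (1 / Real.sqrt N)))
      atTop (nhds (Real.pi / 2)) := by
    have hmul := (hfloor.mul harc).mul_const (Real.pi / 2)
    rw [one_mul, one_mul] at hmul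
    apply hmul.congr'
    filter_upwards [eventually_ge_atTop 1] with N hN
    have h0 : (0:ℝ) < N := by exact_mod_cast Nat.lt_of_lt_of_le one_pos hN
    have hs : (0:ℝ) < Real.sqrt N := Real.sqrt_pos.mpr h0
    field_simp
    ring
  have hsin := (Real.continuous_sin.tendsto (Real.pi / 2)).comp hangle
  rw [Real.sin_pi_div_two] at hsin
  apply hsin.congr'
  filter_upwards [eventually_ge_atTop 2] with N hN
  rw [grover_eq_rot N hN, RotM_pow]
  simp [RotM, Matrix.mulVec, dotProduct, Fin.sum_univ_two]
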